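/- The forgetful functor U : Frob_R → Mod_R, (M, κ) ↦ M, admits a left adjoint L; moreover, for every R-module M the underlying R-module of L(M) is naturally isomorphic to the direct sum ⨁_{n∈ℕ} (F*)ⁿ(M), where F*(N) = R ⊗_{F,R} N denotes extension of scalars along the Frobenius endomorphism F of R. -/

import Mathlib

/-!
STATEMENT 2: For a commutative ring `R` of prime characteristic `p`, the forgetful
functor `U : Frob_R → Mod_R`, `(M, κ) ↦ M`, admits a left adjoint `L`, and the
underlying `R`-module of `L M` is naturally isomorphic to `⨁_{n ∈ ℕ} (F_*)ⁿ M`,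
where `F_* N = R ⊗_{F, R} N` is extension of scalars along the Frobenius `F` of `R`.
-/

open CategoryTheory CategoryTheory.Limits

set_option linter.unusedSectionVars false

universe u

variable (p : ℕ) (R : Type u) [CommRing R] [Fact p.Prime] [CharP R p]

/-- A Frobenius module over `R`: an `R`-module `M` together with an additive map
`κ : M → M` that is semilinear along the Frobenius, i.e. `κ (r • m) = r ^ p • κ m`. -/
structure FrobModule where
  /-- the underlying type -/
  carrier : Type u
  [isAddCommGroup : AddCommGroup carrier]
  [isModule : Module R carrier]
  /-- the Frobenius-semilinear structure map -/
  κ : carrier →+ carrier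
  κ_smul : ∀ (r : R) (m : carrier), κ (r • m) = r ^ p • κ m

attribute [instance] FrobModule.isAddCommGroup FrobModule.isModule

namespace FrobModule

variable {p R}

/-- Morphisms of Frobenius modules: `R`-linear maps commuting with the structure maps. -/
@[ext]
structure Hom (M N : FrobModule p R) where
  /-- the underlying `R`-linear map -/
  toLinearMap : M.carrier →ₗ[R] N.carrier
  comm : ∀ m, toLinearMap (M.κ m) = N.κ (toLinearMap m)

instance : Category (FrobModule p R) where
  Hom M N := Hom M N
  id M := ⟨LinearMap.id, fun _ => rfl⟩
  comp f g := ⟨g.toLinearMap.comp f.toLinearMap, fun m => by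
    simp only [LinearMap.comp_apply, f.comm, g.comm]⟩
  id_comp f := by apply Hom.ext; rfl
  comp_id f := by apply Hom.ext; rfl
  assoc f g h := by apply Hom.ext; rfl

variable (p R)

/-- The forgetful functor from Frobenius modules over `R` to `R`-modules. -/
def forget : FrobModule p R ⥤ ModuleCat.{u} R where
  obj M := ModuleCat.of R M.carrier
  map f := ModuleCat.ofHom f.toLinearMap

end FrobModule

/-- The `n`-fold iterate of an endofunctor. -/
def iterateFunctor {C : Type*} [Category C] (H : C ⥤ C) : ℕ → (C ⥤ C)
  | 0 => 𝟭 C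
  | n + 1 => iterateFunctor H n ⋙ H

/-- Extension of scalars along the Frobenius endomorphism of `R`,
`F_* N = R ⊗_{F, R} N`. -/
noncomputable def frobExtendScalars : ModuleCat.{u} R ⥤ ModuleCat.{u} R :=
  ModuleCat.extendScalars (frobenius R p)

/-- The functor `M ↦ ⨁_{n ∈ ℕ} (F_*)ⁿ M` on `R`-modules. -/
noncomputable def sigmaFrobExtend : ModuleCat.{u} R ⥤ ModuleCat.{u} R where
  obj M := ∐ fun n : ℕ => (iterateFunctor (frobExtendScalars p R) n).obj M
  map g := Limits.Sigma.map fun n => (iterateFunctor (frobExtendScalars p R) n).map g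
  map_id M := by ext n; simp
  map_comp g₁ g₂ := by ext n; simp

set_option maxHeartbeats 1000000

namespace FrobHelper

open ModuleCat DirectSum
open scoped ChangeOfRings

variable {p R}

/-- The `n`-th iterated Frobenius extension of scalars of a module. -/
noncomputable abbrev T (M : ModuleCat.{u} R) (n : ℕ) : ModuleCat.{u} R :=
  (iterateFunctor (frobExtendScalars p R) n).obj M

/-- The Frobenius-semilinear structure map on the direct sum, shifting each summand into the
next one via `x ↦ 1 ⊗ x`. -/
noncomputable def kappaL (M : ModuleCat.{u} R) :
    (⨁ n, (T (p := p) M n : Type u)) →+ (⨁ n, (T (p := p) M n : Type u)) :=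
  DirectSum.toAddMonoid fun n =>
    (DirectSum.of (fun k => (T (p := p) M k : Type u)) (n + 1)).comp
      (ExtendRestrictScalarsAdj.Unit.map (frobenius R p) (X := T (p := p) M n)).hom.toAddMonoidHom

lemma kappaL_of (M : ModuleCat.{u} R) (n : ℕ) (x : T (p := p) M n) :
    kappaL M (DirectSum.of (fun k => (T (p := p) M k : Type u)) n x) =
      DirectSum.of (fun k => (T (p := p) M k : Type u)) (n + 1)
        (TensorProduct.tmul R (M := (ModuleCat.restrictScalars (frobenius R p)).obj (ModuleCat.of R R)) (1 : R) x) :=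
  DirectSum.toAddMonoid_of _ _ _

lemma kappaL_lof (M : ModuleCat.{u} R) (n : ℕ) (x : T (p := p) M n) :
    kappaL M (DirectSum.lof R ℕ (fun k => (T (p := p) M k : Type u)) n x) =
      DirectSum.lof R ℕ (fun k => (T (p := p) M k : Type u)) (n + 1)
        (TensorProduct.tmul R (M := (ModuleCat.restrictScalars (frobenius R p)).obj (ModuleCat.of R R)) (1 : R) x) :=
  kappaL_of M n x

lemma kappaL_smul (M : ModuleCat.{u} R) (r : R) (x : ⨁ n, (T (p := p) M n : Type u)) :
    kappaL M (r • x) = r ^ p • kappaL M x := by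
  induction x using DirectSum.induction_on with
  | zero => simp
  | of n m =>
      rw [← DirectSum.lof_eq_of R, ← (DirectSum.lof R ℕ (fun k => (T (p := p) M k : Type u))
        n).map_smul, kappaL_lof, kappaL_lof]
      have h := (ExtendRestrictScalarsAdj.Unit.map (frobenius R p)
        (X := T (p := p) M n)).hom.map_smul r m
      rw [restrictScalars.smul_def, frobenius_def] at h
      exact (congrArg (DirectSum.lof R ℕ (fun k => (T (p := p) M k : Type u)) (n + 1)) h).trans
        (LinearMap.map_smul _ _ _)
  | add x y hx hy => rw [smul_add, map_add, hx, hy, map_add, smul_add]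

/-- The underlying Frobenius module of the free Frobenius module on `M`. -/
noncomputable def LObj (M : ModuleCat.{u} R) : FrobModule p R where
  carrier := ⨁ n, (T (p := p) M n : Type u)
  κ := kappaL M
  κ_smul := kappaL_smul M

lemma LObj_κ (M : ModuleCat.{u} R) : (LObj (p := p) M).κ = kappaL M := rfl

/-- The structure map of a Frobenius module as a morphism into the Frobenius restriction of
scalars. -/
noncomputable def kappaHom (N : FrobModule p R) :
    ModuleCat.of R N.carrier ⟶
      (ModuleCat.restrictScalars (frobenius R p)).obj (ModuleCat.of R N.carrier) :=
  ModuleCat.ofHom (Y := (ModuleCat.restrictScalars (frobenius R p)).obj (ModuleCat.of R N.carrier)) <|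
  @LinearMap.mk R R _ _ (RingHom.id R)
    (ModuleCat.of R N.carrier)
    ((ModuleCat.restrictScalars (frobenius R p)).obj (ModuleCat.of R N.carrier))
    _ _ (ModuleCat.of R N.carrier).isModule
    ((ModuleCat.restrictScalars (frobenius R p)).obj (ModuleCat.of R N.carrier)).isModule
    ⟨N.κ, map_add N.κ⟩
    (fun r m => by
      show N.κ (r • m) = frobenius R p r • N.κ m
      rw [frobenius_def]
      exact N.κ_smul r m)

/-- The components of the Frobenius-module morphism out of the free object induced by a linear
map `f`. -/
noncomputable def descComp (M : ModuleCat.{u} R) (N : FrobModule p R)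
    (f : M ⟶ ModuleCat.of R N.carrier) : ∀ n : ℕ, (T (p := p) M n ⟶ ModuleCat.of R N.carrier)
  | 0 => f
  | n + 1 => (ExtendRestrictScalarsAdj.homEquiv (frobenius R p)).symm
      (descComp M N f n ≫ kappaHom N)

lemma descComp_succ_apply (M : ModuleCat.{u} R) (N : FrobModule p R)
    (f : M ⟶ ModuleCat.of R N.carrier) (n : ℕ) (x : T (p := p) M n) :
    descComp M N f (n + 1) (TensorProduct.tmul R (M := (ModuleCat.restrictScalars (frobenius R p)).obj (ModuleCat.of R R)) (1 : R) x) = N.κ (descComp M N f n x) := by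
  have h := (ExtendRestrictScalarsAdj.homEquiv (frobenius R p)).apply_symm_apply
    (descComp M N f n ≫ kappaHom N)
  exact congrArg (fun φ => φ.hom x) h

lemma extend_ext {X Y : ModuleCat.{u} R}
    {g₁ g₂ : (ModuleCat.extendScalars (frobenius R p)).obj X ⟶ Y}
    (h : ∀ x : X, g₁ (TensorProduct.tmul R (M := (ModuleCat.restrictScalars (frobenius R p)).obj (ModuleCat.of R R)) (1 : R) x) = g₂ (TensorProduct.tmul R (M := (ModuleCat.restrictScalars (frobenius R p)).obj (ModuleCat.of R R)) (1 : R) x)) :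
    g₁ = g₂ :=
  (ExtendRestrictScalarsAdj.homEquiv (frobenius R p)).injective
    (ModuleCat.hom_ext (LinearMap.ext fun x => h x))

/-- The Frobenius-module morphism out of the free object induced by a linear map `f`. -/
noncomputable def descHom (M : ModuleCat.{u} R) (N : FrobModule p R)
    (f : M ⟶ ModuleCat.of R N.carrier) : LObj (p := p) M ⟶ N where
  toLinearMap := DirectSum.toModule R ℕ N.carrier fun n => (descComp M N f n).hom
  comm := by
    have h : ∀ y : ⨁ n, (T (p := p) M n : Type u),
        DirectSum.toModule R ℕ N.carrier (fun k => (descComp M N f k).hom) (kappaL M y) =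
          N.κ (DirectSum.toModule R ℕ N.carrier (fun k => (descComp M N f k).hom) y) := by
      intro y
      induction y using DirectSum.induction_on with
      | zero => simp
      | of n m =>
          show (DirectSum.toModule R ℕ N.carrier fun k => (descComp M N f k).hom)
              (kappaL M (DirectSum.lof R ℕ (fun k => (T (p := p) M k : Type u)) n m)) =
            N.κ ((DirectSum.toModule R ℕ N.carrier fun k => (descComp M N f k).hom)
              (DirectSum.lof R ℕ (fun k => (T (p := p) M k : Type u)) n m))
          refine (congrArg (DirectSum.toModule R ℕ N.carrier fun k => (descComp M N f k).hom)
            (kappaL_lof M n m)).trans ?_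
          refine (DirectSum.toModule_lof (ι := ℕ) (M := fun k => (T (p := p) M k : Type u))
            (N := N.carrier) (φ := fun k => (descComp M N f k).hom) R (n + 1)
            (TensorProduct.tmul R (M := (ModuleCat.restrictScalars (frobenius R p)).obj (ModuleCat.of R R)) (1 : R) m)).trans ?_
          refine (descComp_succ_apply M N f n m).trans ?_
          exact congrArg N.κ (DirectSum.toModule_lof (ι := ℕ)
            (M := fun k => (T (p := p) M k : Type u)) (N := N.carrier)
            (φ := fun k => (descComp M N f k).hom) R n m).symm
      | add a b ha hb => rw [map_add, map_add, ha, hb, map_add, map_add]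
    exact fun m => h m

/-- The defining hom-equivalence of the free Frobenius module. -/
noncomputable def homEquivL (M : ModuleCat.{u} R) (N : FrobModule p R) :
    (LObj (p := p) M ⟶ N) ≃ (M ⟶ (FrobModule.forget p R).obj N) where
  toFun g := ModuleCat.ofHom (g.toLinearMap.comp (DirectSum.lof R ℕ (fun k => (T (p := p) M k : Type u)) 0))
  invFun f := descHom M N f
  right_inv f := ModuleCat.hom_ext (LinearMap.ext fun m =>
    DirectSum.toModule_lof R (ι := ℕ) (M := fun k => (T (p := p) M k : Type u))
      (N := N.carrier) (φ := fun k => (descComp M N f k).hom) 0 m)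
  left_inv g := by
    have key : ∀ n, descComp M N
        (ModuleCat.ofHom (g.toLinearMap.comp (DirectSum.lof R ℕ (fun k => (T (p := p) M k : Type u)) 0))) n =
        ModuleCat.ofHom (g.toLinearMap.comp (DirectSum.lof R ℕ (fun k => (T (p := p) M k : Type u)) n)) := by
      intro n
      induction n with
      | zero => rfl
      | succ n ih =>
          apply extend_ext (p := p)
          intro x
          refine (descComp_succ_apply M N _ n x).trans ?_
          rw [ih]
          exact ((g.comm (DirectSum.lof R ℕ (fun k => (T (p := p) M k : Type u)) n x)).symm).trans
            (congrArg g.toLinearMap (kappaL_lof M n x))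
    apply FrobModule.Hom.ext
    apply DirectSum.linearMap_ext
    intro n
    refine LinearMap.ext fun x => ?_
    show (DirectSum.toModule R ℕ N.carrier fun k => (descComp M N
        (ModuleCat.ofHom (g.toLinearMap.comp (DirectSum.lof R ℕ (fun k => (T (p := p) M k : Type u)) 0))) k).hom)
        (DirectSum.lof R ℕ (fun k => (T (p := p) M k : Type u)) n x) =
      g.toLinearMap (DirectSum.lof R ℕ (fun k => (T (p := p) M k : Type u)) n x)
    refine (DirectSum.toModule_lof (ι := ℕ) (M := fun k => (T (p := p) M k : Type u))
      (N := N.carrier) (φ := fun k => (descComp M N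
        (ModuleCat.ofHom (g.toLinearMap.comp (DirectSum.lof R ℕ (fun k => (T (p := p) M k : Type u)) 0))) k).hom)
      R n x).trans ?_
    exact congrArg (fun φ => φ.hom x) (key n)

lemma homEquivL_natural (M : ModuleCat.{u} R) (N N' : FrobModule p R)
    (g : N ⟶ N') (h : LObj (p := p) M ⟶ N) :
    homEquivL M N' (h ≫ g) = homEquivL M N h ≫ (FrobModule.forget p R).map g :=
  rfl

/-- The free-Frobenius-module functor. -/
noncomputable def L : ModuleCat.{u} R ⥤ FrobModule p R :=
  Adjunction.leftAdjointOfEquiv (G := FrobModule.forget p R) (fun M N => homEquivL M N)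
    (fun M N N' g h => homEquivL_natural M N N' g h)

/-- The free-forgetful adjunction for Frobenius modules. -/
noncomputable def adj : L (p := p) (R := R) ⊣ FrobModule.forget p R :=
  Adjunction.adjunctionOfEquivLeft _ _

lemma descComp_lof_map (M M' : ModuleCat.{u} R) (g : M ⟶ M')
    (f : M ⟶ ModuleCat.of R (LObj (p := p) M').carrier)
    (hf : ∀ m, f m = DirectSum.lof R ℕ (fun k => (T (p := p) M' k : Type u)) 0 (g m)) (n : ℕ) :
    descComp M (LObj (p := p) M') f n =
      ModuleCat.ofHom ((DirectSum.lof R ℕ (fun k => (T (p := p) M' k : Type u)) n).comp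
        ((iterateFunctor (frobExtendScalars p R) n).map g).hom) := by
  induction n with
  | zero => exact ModuleCat.hom_ext (LinearMap.ext hf)
  | succ n ih =>
      apply extend_ext (p := p)
      intro x
      refine (descComp_succ_apply M (LObj (p := p) M') f n x).trans ?_
      rw [ih]
      refine (kappaL_lof M' n ((iterateFunctor (frobExtendScalars p R) n).map g x)).trans ?_
      exact congrArg (DirectSum.lof R ℕ (fun k => (T (p := p) M' k : Type u)) (n + 1))
        (ModuleCat.ExtendScalars.map_tmul (frobenius R p)
          ((iterateFunctor (frobExtendScalars p R) n).map g) (1 : R) x).symm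

lemma lof_L_map (M M' : ModuleCat.{u} R) (g : M ⟶ M') (n : ℕ) :
    ((iterateFunctor (frobExtendScalars p R) n).map g ≫
        (ModuleCat.ofHom (DirectSum.lof R ℕ (fun k => (T (p := p) M' k : Type u)) n) :
          T (p := p) M' n ⟶ ModuleCat.of R (⨁ k, (T (p := p) M' k : Type u)))) =
      ((ModuleCat.ofHom (DirectSum.lof R ℕ (fun k => (T (p := p) M k : Type u)) n) :
          T (p := p) M n ⟶ ModuleCat.of R (⨁ k, (T (p := p) M k : Type u))) ≫
        (FrobModule.forget p R).map ((L (p := p)).map g)) := by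
  refine ModuleCat.hom_ext (LinearMap.ext fun x => ?_)
  show DirectSum.lof R ℕ (fun k => (T (p := p) M' k : Type u)) n
      ((iterateFunctor (frobExtendScalars p R) n).map g x) =
    DirectSum.toModule R ℕ (LObj (p := p) M').carrier
      (fun k => (descComp M (LObj (p := p) M')
        (g ≫ homEquivL M' (LObj (p := p) M') (𝟙 (LObj (p := p) M'))) k).hom)
      (DirectSum.lof R ℕ (fun k => (T (p := p) M k : Type u)) n x)
  refine Eq.symm ?_
  refine (DirectSum.toModule_lof (ι := ℕ) (M := fun k => (T (p := p) M k : Type u))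
    (N := (LObj (p := p) M').carrier)
    (φ := fun k => (descComp M (LObj (p := p) M')
      (g ≫ homEquivL M' (LObj (p := p) M') (𝟙 (LObj (p := p) M'))) k).hom)
    R n x).trans ?_
  exact congrArg (fun φ => φ.hom x) (descComp_lof_map M M' g
    (g ≫ homEquivL M' (LObj (p := p) M') (𝟙 (LObj (p := p) M'))) (fun m => rfl) n)

end FrobHelper

theorem frobModule_forget_hasLeftAdjoint :
    ∃ L : ModuleCat.{u} R ⥤ FrobModule p R,
      Nonempty (L ⊣ FrobModule.forget p R) ∧
      Nonempty (L ⋙ FrobModule.forget p R ≅ sigmaFrobExtend p R) := by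
  refine ⟨FrobHelper.L, ⟨FrobHelper.adj⟩, ⟨?_⟩⟩
  refine (NatIso.ofComponents (F := sigmaFrobExtend p R)
    (G := FrobHelper.L (p := p) ⋙ FrobModule.forget p R)
    (fun M => ModuleCat.coprodIsoDirectSum (fun n : ℕ => FrobHelper.T (p := p) M n)) ?_).symm
  intro M M' g
  refine Limits.Sigma.hom_ext (f := fun k : ℕ => FrobHelper.T (p := p) M k) _ _ fun n => ?_
  have h1 : Limits.Sigma.ι (fun k : ℕ => FrobHelper.T (p := p) M k) n ≫
      (sigmaFrobExtend p R).map g =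
      (iterateFunctor (frobExtendScalars p R) n).map g ≫
        Limits.Sigma.ι (fun k : ℕ => FrobHelper.T (p := p) M' k) n := by
    simp [sigmaFrobExtend]
  calc Limits.Sigma.ι (fun k : ℕ => FrobHelper.T (p := p) M k) n ≫
      ((sigmaFrobExtend p R).map g ≫
        (ModuleCat.coprodIsoDirectSum (fun k : ℕ => FrobHelper.T (p := p) M' k)).hom)
      = ((iterateFunctor (frobExtendScalars p R) n).map g ≫
          Limits.Sigma.ι (fun k : ℕ => FrobHelper.T (p := p) M' k) n) ≫
        (ModuleCat.coprodIsoDirectSum (fun k : ℕ => FrobHelper.T (p := p) M' k)).hom := by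
          exact (Category.assoc _ _ _).symm.trans (congrArg (fun φ => φ ≫
            (ModuleCat.coprodIsoDirectSum (fun k : ℕ => FrobHelper.T (p := p) M' k)).hom) h1)
    _ = (iterateFunctor (frobExtendScalars p R) n).map g ≫
        (ModuleCat.ofHom (DirectSum.lof R ℕ (fun k => (FrobHelper.T (p := p) M' k : Type u)) n) :
          FrobHelper.T (p := p) M' n ⟶ ModuleCat.of R (DirectSum ℕ fun k => (FrobHelper.T (p := p) M' k : Type u))) := by
          rw [Category.assoc, ModuleCat.ι_coprodIsoDirectSum_hom]
    _ = (id ((ModuleCat.ofHom (DirectSum.lof R ℕ (fun k => (FrobHelper.T (p := p) M k : Type u)) n) :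
          FrobHelper.T (p := p) M n ⟶ ModuleCat.of R (DirectSum ℕ fun k => (FrobHelper.T (p := p) M k : Type u))) ≫
        (FrobModule.forget p R).map ((FrobHelper.L (p := p)).map g)) :
          FrobHelper.T (p := p) M n ⟶ ModuleCat.of R (DirectSum ℕ fun k => (FrobHelper.T (p := p) M' k : Type u))) :=
          FrobHelper.lof_L_map M M' g n
    _ = (id ((Limits.Sigma.ι (fun k : ℕ => FrobHelper.T (p := p) M k) n ≫
          (ModuleCat.coprodIsoDirectSum (fun k : ℕ => FrobHelper.T (p := p) M k)).hom) ≫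
        (FrobModule.forget p R).map ((FrobHelper.L (p := p)).map g)) :
          FrobHelper.T (p := p) M n ⟶ ModuleCat.of R (DirectSum ℕ fun k => (FrobHelper.T (p := p) M' k : Type u))) := by
          rw [ModuleCat.ι_coprodIsoDirectSum_hom]
    _ = (id (Limits.Sigma.ι (fun k : ℕ => FrobHelper.T (p := p) M k) n ≫
        ((ModuleCat.coprodIsoDirectSum (fun k : ℕ => FrobHelper.T (p := p) M k)).hom ≫
          (FrobModule.forget p R).map ((FrobHelper.L (p := p)).map g))) :
          FrobHelper.T (p := p) M n ⟶ ModuleCat.of R (DirectSum ℕ fun k => (FrobHelper.T (p := p) M' k : Type u))) :=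
          Category.assoc _ _ _
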